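/- The E₆ root set S is exactly the orbit of the set of simple roots {r₁,…,r₆} under the Weyl group W of E₆, i.e. S = { w(rᵢ) : w ∈ W, 1 ≤ i ≤ 6 }, where W is the subgroup of the orthogonal group of ℝ⁶ generated by the six simple reflections s_{r₁},…,s_{r₆}. -/

import Mathlib

noncomputable section

open scoped RealInnerProductSpace

/-- The standard orthonormal basis vectors `e₁, …, e₆` of `ℝ⁶` (0-indexed). -/
def e : Fin 6 → EuclideanSpace ℝ (Fin 6) := fun i => EuclideanSpace.single i 1

/-- The simple roots of `E₆` (0-indexed as `r 0, …, r 5`). -/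
def r : Fin 6 → EuclideanSpace ℝ (Fin 6) :=
  ![e 0 + e 1, e 1 - e 0, e 2 - e 1, e 3 - e 2, e 4 - e 3,
    (1/2 : ℝ) • (e 0 - e 1 - e 2 - e 3 - e 4 + Real.sqrt 3 • e 5)]

/-- The `E₆` root set: the vectors `±eᵢ±eⱼ` for `1 ≤ i < j ≤ 5`, together with the vectors
`(ε₁e₁+ε₂e₂+ε₃e₃+ε₄e₄+ε₅e₅+ε√3·e₆)/2` with all signs `±1` and `ε·ε₁ε₂ε₃ε₄ε₅ = 1`. -/
def S : Set (EuclideanSpace ℝ (Fin 6)) :=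
  {v | ∃ i j : Fin 6, i < j ∧ (j : ℕ) ≤ 4 ∧
    ∃ a b : ℝ, (a = 1 ∨ a = -1) ∧ (b = 1 ∨ b = -1) ∧ v = a • e i + b • e j} ∪
  {v | ∃ ε : Fin 6 → ℝ, (∀ k, ε k = 1 ∨ ε k = -1) ∧
    ε 5 * (ε 0 * ε 1 * ε 2 * ε 3 * ε 4) = 1 ∧
    v = (1/2 : ℝ) • (ε 0 • e 0 + ε 1 • e 1 + ε 2 • e 2 + ε 3 • e 3 + ε 4 • e 4 +
      (ε 5 * Real.sqrt 3) • e 5)}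

/-- The Weyl group `W` of `E₆`: the subgroup of the orthogonal group of `ℝ⁶` (the group of
linear isometries of `ℝ⁶`) generated by the six simple reflections
`s_{rᵢ} : v ↦ v − ⟨v,rᵢ⟩·rᵢ`. -/
def W : Subgroup (EuclideanSpace ℝ (Fin 6) ≃ₗᵢ[ℝ] EuclideanSpace ℝ (Fin 6)) :=
  Subgroup.closure {g | ∃ i : Fin 6, ∀ v, g v = v - ⟪v, r i⟫ • r i}

namespace E6Aux

set_option maxHeartbeats 1000000

abbrev E' := EuclideanSpace ℝ (Fin 6)

/-! ### Integer model (coordinates doubled) -/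

def rho : Fin 6 → Fin 6 → ℤ :=
  ![![2,2,0,0,0,0], ![-2,2,0,0,0,0], ![0,-2,2,0,0,0],
    ![0,0,-2,2,0,0], ![0,0,0,-2,2,0], ![1,-1,-1,-1,-1,1]]

def Q4 (a b : Fin 6 → ℤ) : ℤ :=
  a 0 * b 0 + a 1 * b 1 + a 2 * b 2 + a 3 * b 3 + a 4 * b 4 + 3 * (a 5 * b 5)

def sig (i : Fin 6) (a : Fin 6 → ℤ) : Fin 6 → ℤ :=
  fun k => a k - (Q4 a (rho i) / 4) * rho i k

def sb (t : Bool) : ℤ := if t then 1 else -1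

def a1 (i j : Fin 6) (t u : Bool) : Fin 6 → ℤ := fun k =>
  (if k = i then 2 * sb t else 0) + (if k = j then 2 * sb u else 0)

def a2 (t0 t1 t2 t3 t4 : Bool) : Fin 6 → ℤ :=
  ![sb t0, sb t1, sb t2, sb t3, sb t4, sb t0 * sb t1 * sb t2 * sb t3 * sb t4]

def Sq : List (Fin 6 → ℤ) :=
  [![2,2,0,0,0,0],
   ![-2,2,0,0,0,0],
   ![0,-2,2,0,0,0],
   ![0,0,-2,2,0,0],
   ![0,0,0,-2,2,0],
   ![1,-1,-1,-1,-1,1],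
   ![-2,-2,0,0,0,0],
   ![2,0,2,0,0,0],
   ![2,-2,0,0,0,0],
   ![-2,0,2,0,0,0],
   ![-1,1,-1,-1,-1,1],
   ![0,2,-2,0,0,0],
   ![0,-2,0,2,0,0],
   ![0,0,2,-2,0,0],
   ![0,0,-2,0,2,0],
   ![0,0,0,2,-2,0],
   ![-1,1,1,1,1,-1],
   ![-2,0,-2,0,0,0],
   ![0,2,2,0,0,0],
   ![2,0,0,2,0,0],
   ![2,0,-2,0,0,0],
   ![1,-1,1,1,1,-1],
   ![-2,0,0,2,0,0],
   ![-1,-1,1,-1,-1,1],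
   ![0,2,0,-2,0,0],
   ![0,-2,0,0,2,0],
   ![0,0,2,0,-2,0],
   ![0,-2,-2,0,0,0],
   ![-2,0,0,-2,0,0],
   ![0,2,0,2,0,0],
   ![1,1,1,-1,-1,1],
   ![2,0,0,0,2,0],
   ![2,0,0,-2,0,0],
   ![1,1,-1,1,1,-1],
   ![-2,0,0,0,2,0],
   ![-1,-1,-1,1,-1,1],
   ![0,2,0,0,-2,0],
   ![0,-2,0,-2,0,0],
   ![-1,-1,-1,1,1,-1],
   ![-2,0,0,0,-2,0],
   ![0,0,2,2,0,0],
   ![0,2,0,0,2,0],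
   ![1,1,-1,1,-1,1],
   ![2,0,0,0,-2,0],
   ![1,1,1,-1,1,-1],
   ![-1,-1,-1,-1,1,1],
   ![0,0,-2,-2,0,0],
   ![0,-2,0,0,-2,0],
   ![-1,-1,1,-1,1,-1],
   ![0,0,2,0,2,0],
   ![1,-1,1,1,-1,1],
   ![1,1,-1,-1,1,1],
   ![1,1,1,1,-1,-1],
   ![0,0,-2,0,-2,0],
   ![-1,1,-1,-1,1,-1],
   ![-1,-1,1,1,-1,-1],
   ![0,0,0,2,2,0],
   ![1,-1,1,-1,1,1],
   ![-1,1,1,1,-1,1],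
   ![0,0,0,-2,-2,0],
   ![-1,1,-1,1,-1,-1],
   ![1,-1,-1,-1,1,-1],
   ![1,-1,-1,1,1,1],
   ![-1,1,1,-1,1,1],
   ![-1,1,1,-1,-1,-1],
   ![1,-1,-1,1,-1,-1],
   ![-1,1,-1,1,1,1],
   ![1,-1,1,-1,-1,-1],
   ![-1,-1,1,1,1,1],
   ![1,1,-1,-1,-1,-1],
   ![1,1,1,1,1,1],
   ![-1,-1,-1,-1,-1,-1]]

lemma D2 : ∀ a ∈ Sq, ∀ i, sig i a ∈ Sq := by decide
lemma D3 : ∀ j, rho j ∈ Sq := by decide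
lemma D4 : ∀ i, Q4 (rho i) (rho i) = 8 := by decide
lemma D6 : ∀ (i j : Fin 6) (t u : Bool), i < j → (j : ℕ) ≤ 4 → a1 i j t u ∈ Sq := by decide
lemma D7 : ∀ t0 t1 t2 t3 t4 : Bool, a2 t0 t1 t2 t3 t4 ∈ Sq := by decide

def inS (a : Fin 6 → ℤ) : Prop :=
  (∃ i j : Fin 6, i < j ∧ (j : ℕ) ≤ 4 ∧ ∃ t u : Bool, a = a1 i j t u) ∨
  (∃ t0 t1 t2 t3 t4 : Bool, a = a2 t0 t1 t2 t3 t4)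

instance : DecidablePred inS := fun a => by unfold inS; infer_instance

lemma D5 : ∀ a ∈ Sq, inS a := by decide
lemma D8 : ∀ a ∈ Sq, ∀ i, Q4 a (rho i) = 4 * (Q4 a (rho i) / 4) := by decide

/-! ### The embedding of the integer model -/

def m : Fin 6 → ℝ := fun k => if k = 5 then Real.sqrt 3 else 1

def phi (a : Fin 6 → ℤ) : E' := WithLp.toLp 2 (fun k => (a k : ℝ) / 2 * m k)

lemma phi_apply (a : Fin 6 → ℤ) (k : Fin 6) : phi a k = (a k : ℝ) / 2 * m k := rfl

lemma sqrt3_sq : Real.sqrt 3 * Real.sqrt 3 = 3 := Real.mul_self_sqrt (by norm_num)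

section VecLit
variable {α : Type*} (a₀ a₁ a₂ a₃ a₄ a₅ : α)
@[simp] lemma vec6_at0 : ![a₀,a₁,a₂,a₃,a₄,a₅] (0 : Fin 6) = a₀ := rfl
@[simp] lemma vec6_at1 : ![a₀,a₁,a₂,a₃,a₄,a₅] (1 : Fin 6) = a₁ := rfl
@[simp] lemma vec6_at2 : ![a₀,a₁,a₂,a₃,a₄,a₅] (2 : Fin 6) = a₂ := rfl
@[simp] lemma vec6_at3 : ![a₀,a₁,a₂,a₃,a₄,a₅] (3 : Fin 6) = a₃ := rfl
@[simp] lemma vec6_at4 : ![a₀,a₁,a₂,a₃,a₄,a₅] (4 : Fin 6) = a₄ := rfl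
@[simp] lemma vec6_at5 : ![a₀,a₁,a₂,a₃,a₄,a₅] (5 : Fin 6) = a₅ := rfl
end VecLit

lemma inner_phi (a b : Fin 6 → ℤ) : ⟪phi a, phi b⟫ = (Q4 a b : ℝ) / 4 := by
  rw [PiLp.inner_apply]
  simp only [RCLike.inner_apply, conj_trivial, Fin.sum_univ_six, phi_apply, m, Q4]
  norm_num [sqrt3_sq]
  push_cast
  ring_nf
  rw [Real.sq_sqrt (by norm_num : (0:ℝ) ≤ 3)]
  ring

lemma r_eq : ∀ i, r i = phi (rho i) := by
  intro i
  ext k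
  fin_cases i <;> fin_cases k <;>
    simp [r, phi_apply, e, m, rho, EuclideanSpace.single_apply, PiLp.add_apply, PiLp.sub_apply,
      PiLp.smul_apply] <;>
    norm_num

lemma rnorm (i : Fin 6) : ⟪r i, r i⟫ = (2 : ℝ) := by
  rw [r_eq, inner_phi, D4]; norm_num

/-! ### Reflections as linear isometry equivalences -/

def reflL (u : E') : E' →ₗ[ℝ] E' where
  toFun v := v - ⟪v, u⟫ • u
  map_add' x y := by
    show (x + y) - ⟪x + y, u⟫ • u = (x - ⟪x, u⟫ • u) + (y - ⟪y, u⟫ • u)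
    rw [inner_add_left, add_smul]; abel
  map_smul' c x := by
    show (c • x) - ⟪c • x, u⟫ • u = c • (x - ⟪x, u⟫ • u)
    rw [real_inner_smul_left, mul_smul, smul_sub]

lemma reflL_apply (u v : E') : reflL u v = v - ⟪v, u⟫ • u := rfl

lemma refl_invol (u : E') (hu : ⟪u, u⟫ = (2:ℝ)) (v : E') :
    (v - ⟪v, u⟫ • u) - ⟪v - ⟪v, u⟫ • u, u⟫ • u = v := by
  have h : ⟪v - ⟪v, u⟫ • u, u⟫ = -⟪v, u⟫ := by
    rw [inner_sub_left, real_inner_smul_left, hu]; ring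
  rw [h, neg_smul]; abel

def sRefl (u : E') (hu : ⟪u, u⟫ = (2:ℝ)) : E' ≃ₗᵢ[ℝ] E' :=
  LinearEquiv.isometryOfInner
    (LinearEquiv.ofInvolutive (reflL u) (fun v => refl_invol u hu v))
    (by
      intro x y
      show ⟪x - ⟪x, u⟫ • u, y - ⟪y, u⟫ • u⟫ = ⟪x, y⟫
      rw [inner_sub_left, inner_sub_right, inner_sub_right, real_inner_smul_left,
        real_inner_smul_left, real_inner_smul_right, real_inner_smul_right, hu,
        real_inner_comm u y]
      ring)

lemma sRefl_apply (u : E') (hu : ⟪u, u⟫ = (2:ℝ)) (v : E') :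
    sRefl u hu v = v - ⟪v, u⟫ • u := rfl

def sW (i : Fin 6) : E' ≃ₗᵢ[ℝ] E' := sRefl (r i) (rnorm i)

lemma sW_apply (i : Fin 6) (v : E') : sW i v = v - ⟪v, r i⟫ • r i := rfl

lemma sW_mem (i : Fin 6) : sW i ∈ W :=
  Subgroup.subset_closure ⟨i, fun v => sW_apply i v⟩

lemma refl_phi (i : Fin 6) (a : Fin 6 → ℤ)
    (hdvd : Q4 a (rho i) = 4 * (Q4 a (rho i) / 4)) :
    phi a - ⟪phi a, r i⟫ • r i = phi (sig i a) := by
  set c := Q4 a (rho i) / 4 with hc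
  rw [r_eq, inner_phi]
  ext k
  rw [PiLp.sub_apply, PiLp.smul_apply]
  simp only [phi_apply, sig, smul_eq_mul, ← hc]
  rw [hdvd]
  push_cast
  ring

/-! ### Reachability: every root in `Sq` is in the Weyl orbit -/

def X (a : Fin 6 → ℤ) : Prop := ∃ w ∈ W, ∃ i : Fin 6, phi a = w (r i)

lemma base (j : Fin 6) : X (rho j) :=
  ⟨1, one_mem W, j, by rw [r_eq]; rfl⟩

lemma stepX (i : Fin 6) {a b : Fin 6 → ℤ} (h : X a)
    (hdvd : Q4 a (rho i) = 4 * (Q4 a (rho i) / 4)) (hb : sig i a = b) : X b := by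
  obtain ⟨w, hw, j, hj⟩ := h
  refine ⟨sW i * w, mul_mem (sW_mem i) hw, j, ?_⟩
  have : (sW i * w) (r j) = sW i (w (r j)) := rfl
  rw [this, ← hj, sW_apply, refl_phi i a hdvd, hb]

lemma reach : ∀ a ∈ Sq, X a := by
  have h0 : X ![2,2,0,0,0,0] := base 0
  have h1 : X ![-2,2,0,0,0,0] := base 1
  have h2 : X ![0,-2,2,0,0,0] := base 2
  have h3 : X ![0,0,-2,2,0,0] := base 3
  have h4 : X ![0,0,0,-2,2,0] := base 4
  have h5 : X ![1,-1,-1,-1,-1,1] := base 5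
  have h6 : X ![-2,-2,0,0,0,0] := stepX 0 h0 (by decide) (by decide)
  have h7 : X ![2,0,2,0,0,0] := stepX 2 h0 (by decide) (by decide)
  have h8 : X ![2,-2,0,0,0,0] := stepX 1 h1 (by decide) (by decide)
  have h9 : X ![-2,0,2,0,0,0] := stepX 2 h1 (by decide) (by decide)
  have h10 : X ![-1,1,-1,-1,-1,1] := stepX 5 h1 (by decide) (by decide)
  have h11 : X ![0,2,-2,0,0,0] := stepX 2 h2 (by decide) (by decide)
  have h12 : X ![0,-2,0,2,0,0] := stepX 3 h2 (by decide) (by decide)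
  have h13 : X ![0,0,2,-2,0,0] := stepX 3 h3 (by decide) (by decide)
  have h14 : X ![0,0,-2,0,2,0] := stepX 4 h3 (by decide) (by decide)
  have h15 : X ![0,0,0,2,-2,0] := stepX 4 h4 (by decide) (by decide)
  have h16 : X ![-1,1,1,1,1,-1] := stepX 5 h5 (by decide) (by decide)
  have h17 : X ![-2,0,-2,0,0,0] := stepX 2 h6 (by decide) (by decide)
  have h18 : X ![0,2,2,0,0,0] := stepX 1 h7 (by decide) (by decide)
  have h19 : X ![2,0,0,2,0,0] := stepX 3 h7 (by decide) (by decide)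
  have h20 : X ![2,0,-2,0,0,0] := stepX 2 h8 (by decide) (by decide)
  have h21 : X ![1,-1,1,1,1,-1] := stepX 5 h8 (by decide) (by decide)
  have h22 : X ![-2,0,0,2,0,0] := stepX 3 h9 (by decide) (by decide)
  have h23 : X ![-1,-1,1,-1,-1,1] := stepX 5 h9 (by decide) (by decide)
  have h24 : X ![0,2,0,-2,0,0] := stepX 3 h11 (by decide) (by decide)
  have h25 : X ![0,-2,0,0,2,0] := stepX 4 h12 (by decide) (by decide)
  have h26 : X ![0,0,2,0,-2,0] := stepX 4 h13 (by decide) (by decide)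
  have h27 : X ![0,-2,-2,0,0,0] := stepX 1 h17 (by decide) (by decide)
  have h28 : X ![-2,0,0,-2,0,0] := stepX 3 h17 (by decide) (by decide)
  have h29 : X ![0,2,0,2,0,0] := stepX 3 h18 (by decide) (by decide)
  have h30 : X ![1,1,1,-1,-1,1] := stepX 5 h18 (by decide) (by decide)
  have h31 : X ![2,0,0,0,2,0] := stepX 4 h19 (by decide) (by decide)
  have h32 : X ![2,0,0,-2,0,0] := stepX 3 h20 (by decide) (by decide)
  have h33 : X ![1,1,-1,1,1,-1] := stepX 5 h20 (by decide) (by decide)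
  have h34 : X ![-2,0,0,0,2,0] := stepX 4 h22 (by decide) (by decide)
  have h35 : X ![-1,-1,-1,1,-1,1] := stepX 5 h22 (by decide) (by decide)
  have h36 : X ![0,2,0,0,-2,0] := stepX 4 h24 (by decide) (by decide)
  have h37 : X ![0,-2,0,-2,0,0] := stepX 3 h27 (by decide) (by decide)
  have h38 : X ![-1,-1,-1,1,1,-1] := stepX 5 h27 (by decide) (by decide)
  have h39 : X ![-2,0,0,0,-2,0] := stepX 4 h28 (by decide) (by decide)
  have h40 : X ![0,0,2,2,0,0] := stepX 2 h29 (by decide) (by decide)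
  have h41 : X ![0,2,0,0,2,0] := stepX 4 h29 (by decide) (by decide)
  have h42 : X ![1,1,-1,1,-1,1] := stepX 5 h29 (by decide) (by decide)
  have h43 : X ![2,0,0,0,-2,0] := stepX 4 h32 (by decide) (by decide)
  have h44 : X ![1,1,1,-1,1,-1] := stepX 5 h32 (by decide) (by decide)
  have h45 : X ![-1,-1,-1,-1,1,1] := stepX 5 h34 (by decide) (by decide)
  have h46 : X ![0,0,-2,-2,0,0] := stepX 2 h37 (by decide) (by decide)
  have h47 : X ![0,-2,0,0,-2,0] := stepX 4 h37 (by decide) (by decide)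
  have h48 : X ![-1,-1,1,-1,1,-1] := stepX 5 h37 (by decide) (by decide)
  have h49 : X ![0,0,2,0,2,0] := stepX 4 h40 (by decide) (by decide)
  have h50 : X ![1,-1,1,1,-1,1] := stepX 5 h40 (by decide) (by decide)
  have h51 : X ![1,1,-1,-1,1,1] := stepX 5 h41 (by decide) (by decide)
  have h52 : X ![1,1,1,1,-1,-1] := stepX 5 h43 (by decide) (by decide)
  have h53 : X ![0,0,-2,0,-2,0] := stepX 4 h46 (by decide) (by decide)
  have h54 : X ![-1,1,-1,-1,1,-1] := stepX 5 h46 (by decide) (by decide)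
  have h55 : X ![-1,-1,1,1,-1,-1] := stepX 5 h47 (by decide) (by decide)
  have h56 : X ![0,0,0,2,2,0] := stepX 3 h49 (by decide) (by decide)
  have h57 : X ![1,-1,1,-1,1,1] := stepX 5 h49 (by decide) (by decide)
  have h58 : X ![-1,1,1,1,-1,1] := stepX 1 h50 (by decide) (by decide)
  have h59 : X ![0,0,0,-2,-2,0] := stepX 3 h53 (by decide) (by decide)
  have h60 : X ![-1,1,-1,1,-1,-1] := stepX 5 h53 (by decide) (by decide)
  have h61 : X ![1,-1,-1,-1,1,-1] := stepX 1 h54 (by decide) (by decide)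
  have h62 : X ![1,-1,-1,1,1,1] := stepX 5 h56 (by decide) (by decide)
  have h63 : X ![-1,1,1,-1,1,1] := stepX 1 h57 (by decide) (by decide)
  have h64 : X ![-1,1,1,-1,-1,-1] := stepX 5 h59 (by decide) (by decide)
  have h65 : X ![1,-1,-1,1,-1,-1] := stepX 1 h60 (by decide) (by decide)
  have h66 : X ![-1,1,-1,1,1,1] := stepX 1 h62 (by decide) (by decide)
  have h67 : X ![1,-1,1,-1,-1,-1] := stepX 1 h64 (by decide) (by decide)
  have h68 : X ![-1,-1,1,1,1,1] := stepX 2 h66 (by decide) (by decide)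
  have h69 : X ![1,1,-1,-1,-1,-1] := stepX 2 h67 (by decide) (by decide)
  have h70 : X ![1,1,1,1,1,1] := stepX 0 h68 (by decide) (by decide)
  have h71 : X ![-1,-1,-1,-1,-1,-1] := stepX 0 h69 (by decide) (by decide)
  intro a ha
  simp only [Sq, List.mem_cons, List.not_mem_nil, or_false] at ha
  rcases ha with rfl|rfl|rfl|rfl|rfl|rfl|rfl|rfl|rfl|rfl|rfl|rfl|rfl|rfl|rfl|rfl|rfl|rfl|rfl|rfl|rfl|rfl|rfl|rfl|rfl|rfl|rfl|rfl|rfl|rfl|rfl|rfl|rfl|rfl|rfl|rfl|rfl|rfl|rfl|rfl|rfl|rfl|rfl|rfl|rfl|rfl|rfl|rfl|rfl|rfl|rfl|rfl|rfl|rfl|rfl|rfl|rfl|rfl|rfl|rfl|rfl|rfl|rfl|rfl|rfl|rfl|rfl|rfl|rfl|rfl|rfl|rfl <;> assumption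

/-! ### `φ` of roots lies in `S` -/

lemma sb_pm (t : Bool) : ((sb t : ℤ) : ℝ) = 1 ∨ ((sb t : ℤ) : ℝ) = -1 := by
  cases t <;> simp [sb]

lemma pm_sb {x : ℝ} (h : x = 1 ∨ x = -1) : ∃ t : Bool, x = ((sb t : ℤ) : ℝ) := by
  rcases h with rfl | rfl
  · exact ⟨true, by simp [sb]⟩
  · exact ⟨false, by simp [sb]⟩

lemma sb_prod_sq (t0 t1 t2 t3 t4 : Bool) :
    (sb t0 * sb t1 * sb t2 * sb t3 * sb t4) * (sb t0 * sb t1 * sb t2 * sb t3 * sb t4) = 1 := by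
  revert t0 t1 t2 t3 t4; decide

lemma prod_pm (t0 t1 t2 t3 t4 : Bool) :
    ((sb t0 * sb t1 * sb t2 * sb t3 * sb t4 : ℤ) : ℝ) = 1 ∨
    ((sb t0 * sb t1 * sb t2 * sb t3 * sb t4 : ℤ) : ℝ) = -1 := by
  have h : (sb t0 * sb t1 * sb t2 * sb t3 * sb t4 : ℤ) = 1 ∨
      (sb t0 * sb t1 * sb t2 * sb t3 * sb t4 : ℤ) = -1 := by
    revert t0 t1 t2 t3 t4; decide
  rcases h with h | h <;> [left; right] <;> rw [h] <;> norm_num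

lemma phi_a1 (i j : Fin 6) (t u : Bool) (hi : (i : ℕ) ≤ 4) (hj : (j : ℕ) ≤ 4) :
    phi (a1 i j t u) = ((sb t : ℤ) : ℝ) • e i + ((sb u : ℤ) : ℝ) • e j := by
  ext k
  rw [PiLp.add_apply, PiLp.smul_apply, PiLp.smul_apply]
  simp only [phi_apply, a1, e, EuclideanSpace.single_apply, smul_eq_mul]
  by_cases hk : k = 5
  · subst hk
    have h5 : ((5 : Fin 6) : ℕ) = 5 := rfl
    have h1 : ¬((5 : Fin 6) = i) := by
      intro h; rw [← h] at hi; omega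
    have h2 : ¬((5 : Fin 6) = j) := by
      intro h; rw [← h] at hj; omega
    simp [h1, h2]
  · have hm : m k = 1 := by simp [m, hk]
    rw [hm]
    push_cast
    split_ifs <;> ring

lemma phi_a2 (t0 t1 t2 t3 t4 : Bool) :
    phi (a2 t0 t1 t2 t3 t4) =
      (1/2 : ℝ) • (((sb t0 : ℤ) : ℝ) • e 0 + ((sb t1 : ℤ) : ℝ) • e 1 +
        ((sb t2 : ℤ) : ℝ) • e 2 + ((sb t3 : ℤ) : ℝ) • e 3 + ((sb t4 : ℤ) : ℝ) • e 4 +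
        (((sb t0 * sb t1 * sb t2 * sb t3 * sb t4 : ℤ) : ℝ) * Real.sqrt 3) • e 5) := by
  ext k
  fin_cases k <;>
    simp [phi_apply, a2, e, m, EuclideanSpace.single_apply, PiLp.add_apply, PiLp.smul_apply] <;>
    push_cast <;> ring

lemma phi_mem_S (a : Fin 6 → ℤ) (h : inS a) : phi a ∈ S := by
  rcases h with ⟨i, j, hij, hj, t, u, rfl⟩ | ⟨t0, t1, t2, t3, t4, rfl⟩
  · left
    have hi : (i : ℕ) ≤ 4 := by
      have := hij
      rw [Fin.lt_def] at this
      omega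
    exact ⟨i, j, hij, hj, _, _, sb_pm t, sb_pm u, phi_a1 i j t u hi hj⟩
  · right
    refine ⟨![((sb t0 : ℤ) : ℝ), ((sb t1 : ℤ) : ℝ), ((sb t2 : ℤ) : ℝ), ((sb t3 : ℤ) : ℝ),
      ((sb t4 : ℤ) : ℝ), ((sb t0 * sb t1 * sb t2 * sb t3 * sb t4 : ℤ) : ℝ)], ?_, ?_, ?_⟩
    · intro k
      fin_cases k <;> simp only [vec6_at0, vec6_at1, vec6_at2, vec6_at3, vec6_at4, vec6_at5]
      exacts [sb_pm t0, sb_pm t1, sb_pm t2, sb_pm t3, sb_pm t4, prod_pm t0 t1 t2 t3 t4]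
    · simp only [vec6_at0, vec6_at1, vec6_at2, vec6_at3, vec6_at4, vec6_at5]
      have h := sb_prod_sq t0 t1 t2 t3 t4
      have h' : (((sb t0 * sb t1 * sb t2 * sb t3 * sb t4) *
          (sb t0 * sb t1 * sb t2 * sb t3 * sb t4) : ℤ) : ℝ) = ((1 : ℤ) : ℝ) := by rw [h]
      push_cast at h' ⊢
      linarith [h']
    · simp only [vec6_at0, vec6_at1, vec6_at2, vec6_at3, vec6_at4, vec6_at5]
      rw [phi_a2]

/-! ### The forward inclusion -/

lemma S_subset (v : EuclideanSpace ℝ (Fin 6)) (hv : v ∈ S) :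
    ∃ a ∈ Sq, v = phi a := by
  rcases hv with ⟨i, j, hij, hj, A, B, hA, hB, rfl⟩ | ⟨ε, hε, hc, rfl⟩
  · obtain ⟨t, rfl⟩ := pm_sb hA
    obtain ⟨u, rfl⟩ := pm_sb hB
    have hi : (i : ℕ) ≤ 4 := by
      have := hij
      rw [Fin.lt_def] at this
      omega
    exact ⟨a1 i j t u, D6 i j t u hij hj, (phi_a1 i j t u hi hj).symm⟩
  · obtain ⟨t0, h0⟩ := pm_sb (hε 0)
    obtain ⟨t1, h1⟩ := pm_sb (hε 1)
    obtain ⟨t2, h2⟩ := pm_sb (hε 2)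
    obtain ⟨t3, h3⟩ := pm_sb (hε 3)
    obtain ⟨t4, h4⟩ := pm_sb (hε 4)
    have hsq := sb_prod_sq t0 t1 t2 t3 t4
    have hsqR : (((sb t0 * sb t1 * sb t2 * sb t3 * sb t4 : ℤ) : ℝ)) *
        ((sb t0 * sb t1 * sb t2 * sb t3 * sb t4 : ℤ) : ℝ) = 1 := by
      rw [← Int.cast_mul, hsq]; norm_num
    have h5 : ε 5 = ((sb t0 * sb t1 * sb t2 * sb t3 * sb t4 : ℤ) : ℝ) := by
      have hprod : ε 0 * ε 1 * ε 2 * ε 3 * ε 4 =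
          ((sb t0 * sb t1 * sb t2 * sb t3 * sb t4 : ℤ) : ℝ) := by
        rw [h0, h1, h2, h3, h4]; push_cast; ring
      rw [hprod] at hc
      calc ε 5 = ε 5 * (((sb t0 * sb t1 * sb t2 * sb t3 * sb t4 : ℤ) : ℝ) *
          ((sb t0 * sb t1 * sb t2 * sb t3 * sb t4 : ℤ) : ℝ)) := by rw [hsqR]; ring
        _ = (ε 5 * ((sb t0 * sb t1 * sb t2 * sb t3 * sb t4 : ℤ) : ℝ)) *
            ((sb t0 * sb t1 * sb t2 * sb t3 * sb t4 : ℤ) : ℝ) := by ring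
        _ = ((sb t0 * sb t1 * sb t2 * sb t3 * sb t4 : ℤ) : ℝ) := by rw [hc]; ring
    refine ⟨a2 t0 t1 t2 t3 t4, D7 t0 t1 t2 t3 t4, ?_⟩
    rw [phi_a2, h0, h1, h2, h3, h4, h5]

/-! ### The reverse inclusion -/

lemma W_maps (w : EuclideanSpace ℝ (Fin 6) ≃ₗᵢ[ℝ] EuclideanSpace ℝ (Fin 6)) (hw : w ∈ W) :
    (∀ a ∈ Sq, ∃ b ∈ Sq, w (phi a) = phi b) ∧
    (∀ a ∈ Sq, ∃ b ∈ Sq, w⁻¹ (phi a) = phi b) := by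
  induction hw using Subgroup.closure_induction with
  | mem g hg =>
      obtain ⟨i, hgi⟩ := hg
      have hfix : ∀ a ∈ Sq, g (phi a) = phi (sig i a) := by
        intro a ha
        rw [hgi, refl_phi i a (D8 a ha i)]
      have hgg : ∀ v, g (g v) = v := by
        intro v
        rw [hgi, hgi]
        exact refl_invol (r i) (rnorm i) v
      constructor
      · intro a ha
        exact ⟨sig i a, D2 a ha i, hfix a ha⟩
      · intro a ha
        refine ⟨sig i a, D2 a ha i, ?_⟩
        have hga : g (phi (sig i a)) = phi a := by
          rw [← hfix a ha, hgg]
        calc g⁻¹ (phi a) = g⁻¹ (g (phi (sig i a))) := by rw [hga]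
          _ = phi (sig i a) := by
              rw [LinearIsometryEquiv.coe_inv]
              exact g.symm_apply_apply _
  | one =>
      constructor <;> intro a ha <;> exact ⟨a, ha, by simp⟩
  | mul x y hx hy Px Py =>
      constructor
      · intro a ha
        obtain ⟨b, hb, hab⟩ := Py.1 a ha
        obtain ⟨c, hc, hbc⟩ := Px.1 b hb
        refine ⟨c, hc, ?_⟩
        have : (x * y) (phi a) = x (y (phi a)) := rfl
        rw [this, hab, hbc]
      · intro a ha
        obtain ⟨b, hb, hab⟩ := Px.2 a ha
        obtain ⟨c, hc, hbc⟩ := Py.2 b hb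
        refine ⟨c, hc, ?_⟩
        have : (x * y)⁻¹ (phi a) = y⁻¹ (x⁻¹ (phi a)) := by
          rw [mul_inv_rev]; rfl
        rw [this, hab, hbc]
  | inv x hx Px =>
      exact ⟨Px.2, by simpa [inv_inv] using Px.1⟩

end E6Aux

open E6Aux in
/-- The `E₆` root set `S` is exactly the orbit of the simple roots under the Weyl group:
`S = { w(rᵢ) : w ∈ W, 1 ≤ i ≤ 6 }`. -/
theorem e6_roots_eq_weyl_orbit_of_simple_roots :
    S = {v | ∃ w ∈ W, ∃ i : Fin 6, v = w (r i)} := by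
  ext v
  constructor
  · intro hv
    obtain ⟨a, ha, rfl⟩ := S_subset v hv
    exact reach a ha
  · rintro ⟨w, hw, i, rfl⟩
    obtain ⟨b, hb, hab⟩ := (W_maps w hw).1 (rho i) (D3 i)
    rw [r_eq i, hab]
    exact phi_mem_S b (D5 b hb)
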